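/- Let G be a triangle-free simple graph and let C = v1 v2 v3 v4 v5 v1 be a 5-cycle in G such that every vertex of G outside C has exactly two neighbors on C. Then the sets X_i = {v ∈ V(G) : N(v) ∩ V(C) = N(v_i) ∩ V(C)} for i = 1,...,5 (indices of the cycle) partition V(G), and each X_i is an independent set. -/

import Mathlib

/-- If `G` is triangle-free, `C = v₀v₁v₂v₃v₄` is a 5-cycle in `G`, and every
vertex outside `C` has exactly two neighbors on `C`, then the sets
`Xᵢ = {u : N(u) ∩ V(C) = N(vᵢ) ∩ V(C)}` partition `V(G)` and each `Xᵢ` is an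
independent set. -/
theorem partition_into_classes {V : Type*} (G : SimpleGraph V)
    (hTF : G.CliqueFree 3)
    (v : Fin 5 → V) (hinj : Function.Injective v)
    (hcyc : ∀ i : Fin 5, G.Adj (v i) (v (i + 1)))
    (htwo : ∀ u : V, u ∉ Set.range v → {j : Fin 5 | G.Adj u (v j)}.ncard = 2) :
    (∀ u : V, ∃! i : Fin 5, ∀ j : Fin 5, G.Adj u (v j) ↔ G.Adj (v i) (v j)) ∧
    (∀ i : Fin 5, ∀ u w : V,
      (∀ j : Fin 5, G.Adj u (v j) ↔ G.Adj (v i) (v j)) →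
      (∀ j : Fin 5, G.Adj w (v j) ↔ G.Adj (v i) (v j)) →
      ¬ G.Adj u w) := by
  classical
  have hnt : ∀ a b c : V, G.Adj a b → G.Adj a c → G.Adj b c → False := by
    intro a b c hab hac hbc
    exact hTF {a, b, c} (SimpleGraph.is3Clique_triple_iff.mpr ⟨hab, hac, hbc⟩)
  have e31 : ∀ a : Fin 5, a + 3 + 1 = a + 4 := by decide
  have e14 : ∀ a : Fin 5, a + 1 + 4 = a := by decide
  have e41 : ∀ a : Fin 5, a + 4 + 1 = a := by decide
  have e44 : ∀ a : Fin 5, a + 4 + 4 = a + 3 := by decide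
  have e11 : ∀ a : Fin 5, a + 1 + 1 = a + 2 := by decide
  have exh : ∀ a b : Fin 5, b = a ∨ b = a + 1 ∨ b = a + 2 ∨ b = a + 3 ∨ b = a + 4 := by
    decide
  have adjChar : ∀ i j : Fin 5, G.Adj (v i) (v j) ↔ (j = i + 1 ∨ j = i + 4) := by
    intro i j
    constructor
    · intro h
      rcases exh i j with rfl | rfl | rfl | rfl | rfl
      · exact absurd h G.irrefl
      · exact Or.inl rfl
      · exact absurd (hnt (v i) (v (i + 1)) (v (i + 2)) (hcyc i)
          h (by rw [← e11 i]; exact hcyc (i + 1))) id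
      · refine absurd (hnt (v i) (v (i + 3)) (v (i + 4)) h ?_ ?_) id
        · have := hcyc (i + 4); rw [e41] at this; exact this.symm
        · have := hcyc (i + 3); rwa [e31] at this
      · exact Or.inr rfl
    · rintro (rfl | rfl)
      · exact hcyc i
      · have := hcyc (i + 4); rw [e41] at this; exact this.symm
  have uniq : ∀ i i' : Fin 5,
      (∀ j : Fin 5, G.Adj (v i) (v j) ↔ G.Adj (v i') (v j)) → i = i' := by
    intro i i' h
    have h1 := (adjChar i' (i + 1)).mp ((h (i + 1)).mp (hcyc i))
    have h2 := (adjChar i' (i + 4)).mp ((h (i + 4)).mp ((adjChar i (i + 4)).mpr (Or.inr rfl)))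
    clear h
    fin_cases i <;> fin_cases i' <;> revert h1 h2 <;> decide
  constructor
  · intro u
    by_cases hu : u ∈ Set.range v
    · obtain ⟨i, rfl⟩ := hu
      exact ⟨i, fun j => Iff.rfl, fun i' h => (uniq i' i fun j => (h j).symm).symm ▸
        (uniq i' i fun j => (h j).symm)⟩
    · obtain ⟨a, b, hab, hS⟩ := Set.ncard_eq_two.mp (htwo u hu)
      have ha : G.Adj u (v a) := by
        have : a ∈ {j : Fin 5 | G.Adj u (v j)} := by rw [hS]; exact Set.mem_insert _ _
        exact this
      have hb : G.Adj u (v b) := by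
        have : b ∈ {j : Fin 5 | G.Adj u (v j)} := by
          rw [hS]; exact Set.mem_insert_iff.mpr (Or.inr rfl)
        exact this
      have hmem : ∀ j : Fin 5, G.Adj u (v j) ↔ (j = a ∨ j = b) := by
        intro j
        constructor
        · intro h
          have : j ∈ ({a, b} : Set (Fin 5)) := by rw [← hS]; exact h
          simpa using this
        · rintro (rfl | rfl); exacts [ha, hb]
      have hnadj : ¬ G.Adj (v a) (v b) := fun h => hnt u (v a) (v b) ha hb h
      have hb' : b = a + 2 ∨ b = a + 3 := by
        rcases exh a b with rfl | rfl | rfl | rfl | rfl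
        · exact absurd rfl hab
        · exact absurd ((adjChar a (a+1)).mpr (Or.inl rfl)) hnadj
        · exact Or.inl rfl
        · exact Or.inr rfl
        · exact absurd ((adjChar a (a+4)).mpr (Or.inr rfl)) hnadj
      -- pick the class index
      obtain rfl | rfl := hb'
      · refine ⟨a + 1, ?_, ?_⟩
        · intro j
          rw [hmem j, adjChar (a+1) j, e14, e11]
          tauto
        · intro i' h
          refine uniq i' (a+1) ?_
          intro j
          rw [← h j, hmem j, adjChar (a+1) j, e14, e11]
          tauto
      · refine ⟨a + 4, ?_, ?_⟩
        · intro j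
          rw [hmem j, adjChar (a+4) j, e41, e44]
        · intro i' h
          refine uniq i' (a+4) ?_
          intro j
          rw [← h j, hmem j, adjChar (a+4) j, e41, e44]
  · intro i u w hu hw huw
    exact hnt u w (v (i + 1)) huw ((hu (i + 1)).mpr (hcyc i)) ((hw (i + 1)).mpr (hcyc i))
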